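/- Let C be a symmetric monoidal category and let L : C → C be a localization functor (i.e., L factors as a left adjoint F : C → D followed by a fully faithful right adjoint G : D → C). Then the following are equivalent: (i) L is smashing, i.e., L is naturally isomorphic to A ⊗ - for some commutative algebra object A in C; (ii) L carries a symmetric monoidal structure making the natural map id → L monoidal, and the essential image of L is an ideal of C (closed under tensoring with arbitrary objects of C). -/

import Mathlib

open CategoryTheory MonoidalCategory

/-- A lax symmetric monoidal structure on an endofunctor `L` of a symmetric monoidal
category, spelled out in components. -/
structure LaxSymmetricMonoidalStructure {C : Type*} [Category C] [MonoidalCategory C]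
    [SymmetricCategory C] (L : C ⥤ C) where
  ε : 𝟙_ C ⟶ L.obj (𝟙_ C)
  μ : ∀ X Y : C, L.obj X ⊗ L.obj Y ⟶ L.obj (X ⊗ Y)
  μ_natural : ∀ {X Y X' Y' : C} (f : X ⟶ X') (g : Y ⟶ Y'),
    (L.map f ⊗ₘ L.map g) ≫ μ X' Y' = μ X Y ≫ L.map (f ⊗ₘ g)
  associativity : ∀ X Y Z : C,
    (μ X Y ▷ L.obj Z) ≫ μ (X ⊗ Y) Z ≫ L.map (α_ X Y Z).hom =
      (α_ (L.obj X) (L.obj Y) (L.obj Z)).hom ≫ (L.obj X ◁ μ Y Z) ≫ μ X (Y ⊗ Z)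
  left_unitality : ∀ X : C,
    (λ_ (L.obj X)).hom = (ε ▷ L.obj X) ≫ μ (𝟙_ C) X ≫ L.map (λ_ X).hom
  right_unitality : ∀ X : C,
    (ρ_ (L.obj X)).hom = (L.obj X ◁ ε) ≫ μ X (𝟙_ C) ≫ L.map (ρ_ X).hom
  braided : ∀ X Y : C,
    (β_ (L.obj X) (L.obj Y)).hom ≫ μ Y X = μ X Y ≫ L.map (β_ X Y).hom

set_option linter.unusedSectionVars false
set_option maxHeartbeats 1000000

namespace SmashingAux

variable {C : Type*} [Category C] [MonoidalCategory C] [SymmetricCategory C]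
  {D : Type*} [Category D] {F : C ⥤ D} {G : D ⥤ C} (adj : F ⊣ G) [G.Full] [G.Faithful]



variable {C : Type*} [Category C] [MonoidalCategory C] [SymmetricCategory C]
  {D : Type*} [Category D] {F : C ⥤ D} {G : D ⥤ C} (adj : F ⊣ G) [G.Full] [G.Faithful]

lemma isIso_unit_app_obj (d : D) : IsIso (adj.unit.app (G.obj d)) := by
  rw [IsIso.eq_inv_of_inv_hom_id (adj.right_triangle_components d)]
  infer_instance

lemma map_unit_eq (X : C) :
    (F ⋙ G).map (adj.unit.app X) = adj.unit.app ((F ⋙ G).obj X) := by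
  have h1 : (F ⋙ G).map (adj.unit.app X) ≫ G.map (adj.counit.app (F.obj X)) = 𝟙 _ := by
    simp [← G.map_comp]
  haveI := isIso_unit_app_obj adj (F.obj X)
  rw [IsIso.eq_inv_of_inv_hom_id h1]
  exact (IsIso.eq_inv_of_inv_hom_id (adj.right_triangle_components (F.obj X))).symm

lemma isIso_map_unit (X : C) : IsIso ((F ⋙ G).map (adj.unit.app X)) := by
  rw [map_unit_eq]
  exact isIso_unit_app_obj adj _

lemma isIso_unit_app_L (X : C) : IsIso (adj.unit.app ((F ⋙ G).obj X)) :=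
  isIso_unit_app_obj adj _

lemma isIso_unit_app_of_essImage {x : C} (hx : (F ⋙ G).essImage x) :
    IsIso (adj.unit.app x) := by
  obtain ⟨y, ⟨i⟩⟩ := hx
  have h := adj.unit.naturality i.hom
  dsimp at h
  rw [show adj.unit.app x = i.inv ≫ i.hom ≫ adj.unit.app x by simp, h]
  haveI := isIso_unit_app_L adj y
  infer_instance

/-- Maps into local objects are determined by precomposition with `L`-equivalences. -/
lemma cancel_lequiv {a b w : C} (u : a ⟶ b) (hu : IsIso ((F ⋙ G).map u))
    (hw : IsIso (adj.unit.app w)) {ψ ψ' : b ⟶ w}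
    (h : u ≫ ψ = u ≫ ψ') : ψ = ψ' := by
  have key : ∀ φ : b ⟶ w, φ = adj.unit.app b ≫ (F ⋙ G).map φ ≫ inv (adj.unit.app w) := by
    intro φ
    rw [← adj.unit.naturality_assoc φ]
    simp
  have hmap : (F ⋙ G).map ψ = (F ⋙ G).map ψ' := by
    have := congrArg (F ⋙ G).map h
    simp only [Functor.map_comp] at this
    exact (cancel_epi ((F ⋙ G).map u)).mp this
  rw [key ψ, key ψ', hmap]



section Forward

variable {A : C} (e : F ⋙ G ≅ tensorLeft A)



include e

/-- `L X ⊗ Y ≅ L (X ⊗ Y)` from a smashing presentation. -/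
noncomputable def tIso (X Y : C) : (F ⋙ G).obj X ⊗ Y ≅ (F ⋙ G).obj (X ⊗ Y) :=
  whiskerRightIso (e.app X) Y ≪≫ α_ A X Y ≪≫ (e.app (X ⊗ Y)).symm

lemma tIso_natural {X X' : C} (f : X ⟶ X') (Y : C) :
    ((F ⋙ G).map f ▷ Y) ≫ (tIso e X' Y).hom = (tIso e X Y).hom ≫ (F ⋙ G).map (f ▷ Y) := by
  have h1 := e.hom.naturality f
  have h2 := e.inv.naturality (f ▷ Y)
  dsimp at h1 h2 ⊢
  simp only [tIso, Iso.trans_hom, whiskerRightIso_hom, Iso.app_hom, Iso.symm_hom, Iso.app_inv,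
    Category.assoc, ← comp_whiskerRight_assoc, h1]
  simp only [comp_whiskerRight, Category.assoc, associator_naturality_middle_assoc, h2]

lemma isIso_map_whiskerRight {X X' : C} (f : X ⟶ X') (hf : IsIso ((F ⋙ G).map f)) (Y : C) :
    IsIso ((F ⋙ G).map (f ▷ Y)) := by
  have : (F ⋙ G).map (f ▷ Y) =
      (tIso e X Y).inv ≫ ((F ⋙ G).map f ▷ Y) ≫ (tIso e X' Y).hom := by
    rw [tIso_natural e f Y, Iso.inv_hom_id_assoc]
  rw [this]
  infer_instance

lemma isIso_map_whiskerLeft (Y : C) {X X' : C} (f : X ⟶ X') (hf : IsIso ((F ⋙ G).map f)) :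
    IsIso ((F ⋙ G).map (Y ◁ f)) := by
  have : Y ◁ f = (β_ Y X).hom ≫ (f ▷ Y) ≫ (β_ Y X').inv := by
    rw [← BraidedCategory.braiding_naturality_right_assoc]
    simp
  rw [this, Functor.map_comp, Functor.map_comp]
  haveI := isIso_map_whiskerRight e f hf Y
  infer_instance

lemma isIso_map_tensorHom {X X' Y Y' : C} (f : X ⟶ X') (g : Y ⟶ Y')
    (hf : IsIso ((F ⋙ G).map f)) (hg : IsIso ((F ⋙ G).map g)) :
    IsIso ((F ⋙ G).map (f ⊗ₘ g)) := by
  rw [MonoidalCategory.tensorHom_def, Functor.map_comp]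
  haveI := isIso_map_whiskerRight e f hf Y
  haveI := isIso_map_whiskerLeft e X' g hg
  infer_instance







/-- The multiplication of the induced lax monoidal structure. -/
noncomputable def μF (X Y : C) :
    (F ⋙ G).obj X ⊗ (F ⋙ G).obj Y ⟶ (F ⋙ G).obj (X ⊗ Y) :=
  haveI := isIso_map_tensorHom e (adj.unit.app X) (adj.unit.app Y)
    (isIso_map_unit adj X) (isIso_map_unit adj Y)
  adj.unit.app _ ≫ inv ((F ⋙ G).map (adj.unit.app X ⊗ₘ adj.unit.app Y))

lemma μF_spec (X Y : C) :
    (adj.unit.app X ⊗ₘ adj.unit.app Y) ≫ μF adj e X Y = adj.unit.app (X ⊗ Y) := by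
  haveI := isIso_map_tensorHom e (adj.unit.app X) (adj.unit.app Y)
    (isIso_map_unit adj X) (isIso_map_unit adj Y)
  have h := adj.unit.naturality (adj.unit.app X ⊗ₘ adj.unit.app Y)
  rw [Functor.id_map] at h
  rw [μF, ← Category.assoc, h, Category.assoc, IsIso.hom_inv_id, Category.comp_id]
  rfl

lemma μF_spec_assoc {W : C} (X Y : C) (k : (F ⋙ G).obj (X ⊗ Y) ⟶ W) :
    (adj.unit.app X ⊗ₘ adj.unit.app Y) ≫ μF adj e X Y ≫ k = adj.unit.app (X ⊗ Y) ≫ k := by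
  rw [← Category.assoc, μF_spec]

lemma μF_natural {X Y X' Y' : C} (f : X ⟶ X') (g : Y ⟶ Y') :
    ((F ⋙ G).map f ⊗ₘ (F ⋙ G).map g) ≫ μF adj e X' Y' =
      μF adj e X Y ≫ (F ⋙ G).map (f ⊗ₘ g) := by
  apply cancel_lequiv adj (adj.unit.app X ⊗ₘ adj.unit.app Y)
    (isIso_map_tensorHom e _ _ (isIso_map_unit adj X) (isIso_map_unit adj Y))
    (isIso_unit_app_L adj (X' ⊗ Y'))
  have hf := adj.unit.naturality f
  have hg := adj.unit.naturality g
  have hfg := adj.unit.naturality (f ⊗ₘ g)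
  rw [Functor.id_map] at hf hg hfg
  rw [← Category.assoc, tensorHom_comp_tensorHom, ← hf, ← hg, ← tensorHom_comp_tensorHom, Category.assoc, μF_spec,
    μF_spec_assoc, ← hfg]

lemma μF_associativity (X Y Z : C) :
    (μF adj e X Y ▷ (F ⋙ G).obj Z) ≫ μF adj e (X ⊗ Y) Z ≫ (F ⋙ G).map (α_ X Y Z).hom =
      (α_ ((F ⋙ G).obj X) ((F ⋙ G).obj Y) ((F ⋙ G).obj Z)).hom ≫
        ((F ⋙ G).obj X ◁ μF adj e Y Z) ≫ μF adj e X (Y ⊗ Z) := by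
  haveI h1 := isIso_map_tensorHom e _ _ (isIso_map_unit adj X) (isIso_map_unit adj Y)
  apply cancel_lequiv adj ((adj.unit.app X ⊗ₘ adj.unit.app Y) ⊗ₘ adj.unit.app Z)
    (isIso_map_tensorHom e _ _ h1 (isIso_map_unit adj Z))
    (isIso_unit_app_L adj (X ⊗ (Y ⊗ Z)))
  have ha := adj.unit.naturality (α_ X Y Z).hom
  rw [Functor.id_map] at ha
  have lhs : ((adj.unit.app X ⊗ₘ adj.unit.app Y) ⊗ₘ adj.unit.app Z) ≫
      (μF adj e X Y ▷ (F ⋙ G).obj Z) ≫ μF adj e (X ⊗ Y) Z ≫ (F ⋙ G).map (α_ X Y Z).hom =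
      (α_ X Y Z).hom ≫ adj.unit.app (X ⊗ (Y ⊗ Z)) := by
    rw [← tensorHom_id, tensorHom_comp_tensorHom_assoc, Category.comp_id, μF_spec, μF_spec_assoc]
    exact ha.symm
  have rhs : ((adj.unit.app X ⊗ₘ adj.unit.app Y) ⊗ₘ adj.unit.app Z) ≫
      (α_ ((F ⋙ G).obj X) ((F ⋙ G).obj Y) ((F ⋙ G).obj Z)).hom ≫
      ((F ⋙ G).obj X ◁ μF adj e Y Z) ≫ μF adj e X (Y ⊗ Z) =
      (α_ X Y Z).hom ≫ adj.unit.app (X ⊗ (Y ⊗ Z)) := by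
    rw [associator_naturality_assoc, ← id_tensorHom, tensorHom_comp_tensorHom_assoc, Category.comp_id,
      μF_spec, μF_spec]
    rfl
  rw [lhs, rhs]

lemma μF_left_unitality (X : C) :
    (λ_ ((F ⋙ G).obj X)).hom =
      (adj.unit.app (𝟙_ C) ▷ (F ⋙ G).obj X) ≫ μF adj e (𝟙_ C) X ≫
        (F ⋙ G).map (λ_ X).hom := by
  apply cancel_lequiv adj (𝟙_ C ◁ adj.unit.app X)
    (isIso_map_whiskerLeft e _ _ (isIso_map_unit adj X))
    (isIso_unit_app_L adj X)
  have hl := adj.unit.naturality (λ_ X).hom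
  rw [Functor.id_map] at hl
  rw [leftUnitor_naturality, whisker_exchange_assoc, ← tensorHom_def_assoc, μF_spec_assoc, ← hl]
  rfl

lemma μF_right_unitality (X : C) :
    (ρ_ ((F ⋙ G).obj X)).hom =
      ((F ⋙ G).obj X ◁ adj.unit.app (𝟙_ C)) ≫ μF adj e X (𝟙_ C) ≫
        (F ⋙ G).map (ρ_ X).hom := by
  apply cancel_lequiv adj (adj.unit.app X ▷ 𝟙_ C)
    (isIso_map_whiskerRight e _ (isIso_map_unit adj X) _)
    (isIso_unit_app_L adj X)
  have hr := adj.unit.naturality (ρ_ X).hom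
  rw [Functor.id_map] at hr
  rw [rightUnitor_naturality, ← whisker_exchange_assoc, ← tensorHom_def'_assoc, μF_spec_assoc,
    ← hr]
  rfl

lemma μF_braided (X Y : C) :
    (β_ ((F ⋙ G).obj X) ((F ⋙ G).obj Y)).hom ≫ μF adj e Y X =
      μF adj e X Y ≫ (F ⋙ G).map (β_ X Y).hom := by
  apply cancel_lequiv adj (adj.unit.app X ⊗ₘ adj.unit.app Y)
    (isIso_map_tensorHom e _ _ (isIso_map_unit adj X) (isIso_map_unit adj Y))
    (isIso_unit_app_L adj (Y ⊗ X))
  have hb := adj.unit.naturality (β_ X Y).hom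
  rw [Functor.id_map] at hb
  rw [BraidedCategory.braiding_naturality_assoc, μF_spec, μF_spec_assoc, ← hb]
  rfl



end Forward

section Backward

variable (s : LaxSymmetricMonoidalStructure (F ⋙ G))
  (hε : s.ε = adj.unit.app (𝟙_ C))
  (hμ : ∀ X Y : C, (adj.unit.app X ⊗ₘ adj.unit.app Y) ≫ s.μ X Y = adj.unit.app (X ⊗ Y))
  (hideal : ∀ c x : C, (F ⋙ G).essImage x → (F ⋙ G).essImage (c ⊗ x))





/-- The comparison map `L𝟙 ⊗ X ⟶ L X`. -/
noncomputable def fMap (X : C) : (F ⋙ G).obj (𝟙_ C) ⊗ X ⟶ (F ⋙ G).obj X :=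
  ((F ⋙ G).obj (𝟙_ C) ◁ adj.unit.app X) ≫ s.μ (𝟙_ C) X ≫ (F ⋙ G).map (λ_ X).hom

include hideal in
lemma essImage_tensor (X : C) : (F ⋙ G).essImage ((F ⋙ G).obj (𝟙_ C) ⊗ X) := by
  have h1 : (F ⋙ G).essImage (X ⊗ (F ⋙ G).obj (𝟙_ C)) :=
    hideal X _ ((F ⋙ G).obj_mem_essImage (𝟙_ C))
  exact Functor.essImage.ofIso (β_ X ((F ⋙ G).obj (𝟙_ C))) h1

include hε hμ in
lemma unit_comp_fMap (X : C) :
    ((λ_ X).inv ≫ (s.ε ▷ X)) ≫ fMap adj s X = adj.unit.app X := by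
  have hl := adj.unit.naturality (λ_ X).hom
  rw [Functor.id_map] at hl
  rw [fMap, hε, Category.assoc, ← tensorHom_def_assoc]
  slice_lhs 2 3 => rw [hμ (𝟙_ C) X]
  rw [← hl, Iso.inv_hom_id_assoc]

include hε hμ hideal in
lemma isIso_fMap (X : C) : IsIso (fMap adj s X) := by
  haveI hloc : IsIso (adj.unit.app ((F ⋙ G).obj (𝟙_ C) ⊗ X)) :=
    isIso_unit_app_of_essImage adj (essImage_tensor hideal X)
  haveI hlocX : IsIso (adj.unit.app ((F ⋙ G).obj X)) := isIso_unit_app_L adj X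
  refine ⟨⟨(F ⋙ G).map ((λ_ X).inv ≫ (s.ε ▷ X)) ≫
    inv (adj.unit.app ((F ⋙ G).obj (𝟙_ C) ⊗ X)), ?_, ?_⟩⟩
  · -- fMap ≫ k = 𝟙
    have key : fMap adj s X ≫ (F ⋙ G).map ((λ_ X).inv ≫ (s.ε ▷ X)) =
        adj.unit.app ((F ⋙ G).obj (𝟙_ C) ⊗ X) := by
      rw [Functor.map_comp, fMap]
      simp only [Category.assoc]
      rw [← Functor.map_comp_assoc, Iso.hom_inv_id, CategoryTheory.Functor.map_id, Category.id_comp]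
      have hnat := s.μ_natural (X := 𝟙_ C) (Y := X) s.ε (𝟙 X)
      rw [CategoryTheory.Functor.map_id, tensorHom_id, tensorHom_id] at hnat
      rw [← hnat, ← tensorHom_def'_assoc, hε, map_unit_eq]
      exact hμ _ _
    rw [← Category.assoc, key, IsIso.hom_inv_id]
  · -- k ≫ fMap = 𝟙
    have hnat : inv (adj.unit.app ((F ⋙ G).obj (𝟙_ C) ⊗ X)) ≫ fMap adj s X =
        (F ⋙ G).map (fMap adj s X) ≫ inv (adj.unit.app ((F ⋙ G).obj X)) := by
      rw [IsIso.inv_comp_eq, ← Category.assoc, ← adj.unit.naturality (fMap adj s X)]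
      simp
    rw [Category.assoc, hnat, ← Category.assoc, ← Functor.map_comp]
    rw [unit_comp_fMap adj s hε hμ X, map_unit_eq adj X, IsIso.hom_inv_id]






lemma fMap_natural {X Y : C} (g : X ⟶ Y) :
    ((F ⋙ G).obj (𝟙_ C) ◁ g) ≫ fMap adj s Y = fMap adj s X ≫ (F ⋙ G).map g := by
  have hg := adj.unit.naturality g
  rw [Functor.id_map] at hg
  have hnat := s.μ_natural (𝟙 (𝟙_ C)) g
  rw [CategoryTheory.Functor.map_id, id_tensorHom, id_tensorHom] at hnat
  have hl := leftUnitor_naturality g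
  rw [fMap, fMap, ← MonoidalCategory.whiskerLeft_comp_assoc, hg,
    MonoidalCategory.whiskerLeft_comp_assoc]
  slice_lhs 2 3 => rw [hnat]
  rw [Category.assoc, ← Functor.map_comp, hl, Functor.map_comp]
  simp only [Category.assoc]

/-- The commutative monoid structure on `L 𝟙`. -/
noncomputable def commMonOfLax : CommMon C :=
  letI : MonObj ((F ⋙ G).obj (𝟙_ C)) := {
  one := s.ε
  mul := s.μ (𝟙_ C) (𝟙_ C) ≫ (F ⋙ G).map (λ_ (𝟙_ C)).hom
  one_mul := (s.left_unitality (𝟙_ C)).symm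
  mul_one := by
    rw [unitors_equal]
    exact (s.right_unitality (𝟙_ C)).symm
  mul_assoc := by
    have h1 := s.μ_natural (λ_ (𝟙_ C)).hom (𝟙 (𝟙_ C))
    rw [CategoryTheory.Functor.map_id, tensorHom_id, tensorHom_id] at h1
    have h2 := s.μ_natural (𝟙 (𝟙_ C)) (λ_ (𝟙_ C)).hom
    rw [CategoryTheory.Functor.map_id, id_tensorHom, id_tensorHom] at h2
    have h3 := s.associativity (𝟙_ C) (𝟙_ C) (𝟙_ C)
    have hcoh : ((λ_ (𝟙_ C)).hom ▷ 𝟙_ C) ≫ (λ_ (𝟙_ C)).hom =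
        (α_ (𝟙_ C) (𝟙_ C) (𝟙_ C)).hom ≫ (𝟙_ C ◁ (λ_ (𝟙_ C)).hom) ≫ (λ_ (𝟙_ C)).hom := by
      coherence
    simp only [comp_whiskerRight, MonoidalCategory.whiskerLeft_comp, Category.assoc]
    slice_lhs 2 3 => rw [h1]
    slice_rhs 3 4 => rw [h2]
    slice_lhs 3 4 => rw [← Functor.map_comp, hcoh]
    rw [Functor.map_comp, Functor.map_comp]
    slice_lhs 1 3 => rw [h3]
    simp only [Category.assoc, ← Functor.map_comp] }
  letI : IsCommMonObj ((F ⋙ G).obj (𝟙_ C)) := {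
  mul_comm := by
    show (β_ ((F ⋙ G).obj (𝟙_ C)) ((F ⋙ G).obj (𝟙_ C))).hom ≫
        (s.μ (𝟙_ C) (𝟙_ C) ≫ (F ⋙ G).map (λ_ (𝟙_ C)).hom) =
      s.μ (𝟙_ C) (𝟙_ C) ≫ (F ⋙ G).map (λ_ (𝟙_ C)).hom
    rw [← Category.assoc, s.braided (𝟙_ C) (𝟙_ C), Category.assoc, ← Functor.map_comp,
      braiding_leftUnitor, ← unitors_equal] }
  { X := (F ⋙ G).obj (𝟙_ C) }

/-- The smashing natural isomorphism. -/
noncomputable def smashIso : F ⋙ G ≅ tensorLeft ((F ⋙ G).obj (𝟙_ C)) :=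
  (NatIso.ofComponents
    (fun X => @asIso _ _ _ _ (fMap adj s X) (isIso_fMap adj s hε hμ hideal X))
    (fun {X Y} g => by
      dsimp
      exact fMap_natural adj s g)).symm



end Backward

end SmashingAux

open SmashingAux in
/-- Let `C` be a symmetric monoidal category and let `L = F ⋙ G` be a localization
(where `F ⊣ G` with `G` fully faithful).  Then `L` is smashing (i.e. `L ≅ A ⊗ -` for
some commutative algebra object `A` of `C`) if and only if `L` carries a symmetric
monoidal structure making the unit `id ⟶ L` monoidal, and the essential image of `L`
is an ideal of `C`. -/
theorem smashing_iff_monoidal_and_ideal {C : Type*} [Category C] [MonoidalCategory C]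
    [SymmetricCategory C] {D : Type*} [Category D] (F : C ⥤ D) (G : D ⥤ C)
    (adj : F ⊣ G) [G.Full] [G.Faithful] :
    (∃ A : CommMon C, Nonempty (F ⋙ G ≅ tensorLeft A.X)) ↔
      ((∃ s : LaxSymmetricMonoidalStructure (F ⋙ G),
          s.ε = adj.unit.app (𝟙_ C) ∧
          ∀ X Y : C, (adj.unit.app X ⊗ₘ adj.unit.app Y) ≫ s.μ X Y = adj.unit.app (X ⊗ Y)) ∧
        ∀ c x : C, (F ⋙ G).essImage x → (F ⋙ G).essImage (c ⊗ x)) := by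
  constructor
  · rintro ⟨A, ⟨e⟩⟩
    refine ⟨⟨{ ε := adj.unit.app (𝟙_ C)
               μ := μF adj e
               μ_natural := fun {X Y X' Y'} f g => μF_natural adj e f g
               associativity := μF_associativity adj e
               left_unitality := μF_left_unitality adj e
               right_unitality := μF_right_unitality adj e
               braided := μF_braided adj e }, rfl, μF_spec adj e⟩, ?_⟩
    intro c x hx
    obtain ⟨y, ⟨i⟩⟩ := hx
    exact ⟨c ⊗ y, ⟨e.app (c ⊗ y) ≪≫ (α_ A.X c y).symm ≪≫ whiskerRightIso (β_ A.X c) y ≪≫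
      α_ c A.X y ≪≫ whiskerLeftIso c ((e.app y).symm ≪≫ i)⟩⟩
  · rintro ⟨⟨s, hε, hμ⟩, hideal⟩
    exact ⟨commMonOfLax s, ⟨smashIso adj s hε hμ hideal⟩⟩
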